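/- Let Λ be a finite-dimensional k-algebra admitting a nondegenerate associative bilinear form whose associated Nakayama automorphism ν has finite order, and let G be the finite cyclic group generated by ν acting on Λ. Then the skew group algebra ΛG is a symmetric algebra: it admits a bilinear form that is nondegenerate, associative and symmetric. -/

import Mathlib

/-- The multiplication of the skew group algebra `ΛG`, modeled on the vector space of
functions `G → Λ` (the element `λ ⊗ g` being `Pi.single g λ`), where the finite group `G`
acts on `Λ` via `ρ : G →* (Λ ≃ₐ[k] Λ)`.  It is the bilinear extension of
`(λ ⊗ g)(λ' ⊗ g') = λ g(λ') ⊗ gg'`. -/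
def skewMul {k Λ G : Type*} [Field k] [Ring Λ] [Algebra k Λ] [Group G] [Fintype G]
    (ρ : G →* (Λ ≃ₐ[k] Λ)) (f f' : G → Λ) : G → Λ :=
  fun x => ∑ g : G, f g * ρ g (f' (g⁻¹ * x))

/-- Let `Λ` be a finite-dimensional `k`-algebra admitting a
nondegenerate associative bilinear form whose associated Nakayama automorphism `ν` has
finite order, and let `G` be the finite cyclic group generated by `ν`, acting on `Λ`.
Then the skew group algebra `ΛG` is a symmetric algebra: it admits a bilinear form
that is nondegenerate, associative and symmetric. -/
theorem stmt_6 (k Λ G : Type*) [Field k] [Ring Λ] [Algebra k Λ] [FiniteDimensional k Λ]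
    [Group G] [Fintype G] [DecidableEq G]
    (B : Λ → Λ → k)
    -- `B` is bilinear
    (hadd_l : ∀ x x' y : Λ, B (x + x') y = B x y + B x' y)
    (hsmul_l : ∀ (c : k) (x y : Λ), B (c • x) y = c * B x y)
    (hadd_r : ∀ x y y' : Λ, B x (y + y') = B x y + B x y')
    (hsmul_r : ∀ (c : k) (x y : Λ), B x (c • y) = c * B x y)
    -- `B` is associative
    (hassoc : ∀ x y z : Λ, B (x * y) z = B x (y * z))
    -- `B` is nondegenerate
    (hnd : ∀ x : Λ, (∀ y : Λ, B x y = 0) → x = 0)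
    -- `ν` is the associated Nakayama automorphism, of finite order
    (ν : Λ ≃ₐ[k] Λ) (hν : ∀ a b : Λ, B a b = B b (ν a)) (hfin : IsOfFinOrder ν)
    -- `G` is the finite cyclic group generated by `ν`, acting on `Λ` via `ρ`:
    -- it is generated by an element `g₀` of order `orderOf ν` which acts as `ν`
    (ρ : G →* (Λ ≃ₐ[k] Λ)) (g₀ : G) (hg₀ : ρ g₀ = ν)
    (hgen : ∀ g : G, g ∈ Subgroup.zpowers g₀) (hordg : orderOf g₀ = orderOf ν) :
    -- `ΛG` is symmetric: it admits a nondegenerate associative symmetric bilinear form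
    ∃ Bs : (G → Λ) → (G → Λ) → k,
      -- bilinear
      (∀ x x' y : G → Λ, Bs (x + x') y = Bs x y + Bs x' y) ∧
      (∀ (c : k) (x y : G → Λ), Bs (c • x) y = c * Bs x y) ∧
      (∀ x y y' : G → Λ, Bs x (y + y') = Bs x y + Bs x y') ∧
      (∀ (c : k) (x y : G → Λ), Bs x (c • y) = c * Bs x y) ∧
      -- associative
      (∀ x y z : G → Λ, Bs (skewMul ρ x y) z = Bs x (skewMul ρ y z)) ∧
      -- symmetric
      (∀ x y : G → Λ, Bs x y = Bs y x) ∧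
      -- nondegenerate
      (∀ x : G → Λ, (∀ y : G → Λ, Bs x y = 0) → x = 0) := by
  classical
  -- B kills zero in each argument
  have h0l : ∀ y : Λ, B 0 y = 0 := fun y => by
    simpa using hsmul_l 0 0 y
  have h0r : ∀ x : Λ, B x 0 = 0 := fun x => by
    simpa using hsmul_r 0 x 0
  -- B of finite sums
  have hsum_l : ∀ (s : Finset G) (f : G → Λ) (t : Λ),
      B (∑ i ∈ s, f i) t = ∑ i ∈ s, B (f i) t := by
    intro s f t
    induction s using Finset.cons_induction with
    | empty => simpa using h0l t
    | cons a s ha ih => rw [Finset.sum_cons, Finset.sum_cons, hadd_l, ih]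
  have hsum_r : ∀ (s : Finset G) (x : Λ) (f : G → Λ),
      B x (∑ i ∈ s, f i) = ∑ i ∈ s, B x (f i) := by
    intro s x f
    induction s using Finset.cons_induction with
    | empty => simpa using h0r x
    | cons a s ha ih => rw [Finset.sum_cons, Finset.sum_cons, hadd_r, ih]
  -- ν-invariance of B
  have hν' : ∀ a b : Λ, B (ν a) (ν b) = B a b := fun a b =>
    (hν b (ν a)).symm.trans (hν a b).symm
  have happ : ∀ a : Λ, ν (ν⁻¹ a) = a := by
    intro a
    have : (ν * ν⁻¹) a = a := by rw [mul_inv_cancel]; rfl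
    exact this
  have hinv : ∀ a b : Λ, B (ν⁻¹ a) (ν⁻¹ b) = B a b := by
    intro a b
    calc B (ν⁻¹ a) (ν⁻¹ b) = B (ν (ν⁻¹ a)) (ν (ν⁻¹ b)) := (hν' _ _).symm
      _ = B a b := by rw [happ, happ]
  have hpow : ∀ n : ℤ, ∀ a b : Λ, B ((ν ^ n) a) ((ν ^ n) b) = B a b := by
    intro n
    induction n using Int.induction_on with
    | zero => intro a b; simp
    | succ i ih =>
        intro a b
        have h1 : (ν ^ ((i : ℤ) + 1)) = ν ^ (i : ℤ) * ν := zpow_add_one ν i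
        rw [h1]
        have h2 : ∀ c : Λ, (ν ^ (i : ℤ) * ν) c = (ν ^ (i : ℤ)) (ν c) := fun c => rfl
        rw [h2, h2, ih, hν']
    | pred i ih =>
        intro a b
        have h1 : (ν ^ (-(i : ℤ) - 1)) = ν ^ (-(i : ℤ)) * ν⁻¹ := zpow_sub_one ν (-(i : ℤ))
        rw [h1]
        have h2 : ∀ c : Λ, (ν ^ (-(i : ℤ)) * ν⁻¹) c = (ν ^ (-(i : ℤ))) (ν⁻¹ c) := fun c => rfl
        rw [h2, h2, ih, hinv]
  -- invariance of B under the action of G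
  have hρinv : ∀ (g : G) (a b : Λ), B (ρ g a) (ρ g b) = B a b := by
    intro g a b
    obtain ⟨n, hn⟩ := hgen g
    rw [← hn, map_zpow, hg₀]
    exact hpow n a b
  have hcancel : ∀ (g : G) (c : Λ), ρ g (ρ g⁻¹ c) = c := by
    intro g c
    have : (ρ g * ρ g⁻¹) c = c := by
      rw [← map_mul, mul_inv_cancel, map_one]; rfl
    exact this
  -- the twisted Nakayama relation
  have hρν : ∀ (g : G) (a b : Λ), B a (ρ g b) = B b (ρ g⁻¹ (ν a)) := by
    intro g a b
    calc B a (ρ g b) = B (ρ g b) (ν a) := hν a (ρ g b)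
      _ = B (ρ g b) (ρ g (ρ g⁻¹ (ν a))) := by rw [hcancel]
      _ = B b (ρ g⁻¹ (ν a)) := hρinv g b (ρ g⁻¹ (ν a))
  -- G is abelian
  have hcomm : ∀ a b : G, a * b = b * a := by
    intro a b
    obtain ⟨m, hm⟩ := hgen a
    obtain ⟨n, hn⟩ := hgen b
    rw [← hm, ← hn, ← zpow_add, ← zpow_add, add_comm]
  -- the symmetric form
  refine ⟨fun x y => ∑ g : G, B (x g) (ρ g (y (g⁻¹ * g₀))), ?_, ?_, ?_, ?_, ?_, ?_, ?_⟩
  · intro x x' y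
    simp only [Pi.add_apply, hadd_l, Finset.sum_add_distrib]
  · intro c x y
    simp only [Pi.smul_apply, hsmul_l, Finset.mul_sum]
  · intro x y y'
    simp only [Pi.add_apply, map_add, hadd_r, Finset.sum_add_distrib]
  · intro c x y
    simp only [Pi.smul_apply, map_smul, hsmul_r, Finset.mul_sum]
  · -- associativity
    intro x y z
    simp only [skewMul]
    calc ∑ h : G, B (∑ g : G, x g * ρ g (y (g⁻¹ * h))) (ρ h (z (h⁻¹ * g₀)))
        = ∑ h : G, ∑ g : G, B (x g * ρ g (y (g⁻¹ * h))) (ρ h (z (h⁻¹ * g₀))) := by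
          refine Finset.sum_congr rfl fun h _ => ?_
          rw [hsum_l]
      _ = ∑ g : G, ∑ h : G, B (x g) (ρ g (y (g⁻¹ * h)) * ρ h (z (h⁻¹ * g₀))) := by
          rw [Finset.sum_comm]
          exact Finset.sum_congr rfl fun g _ => Finset.sum_congr rfl fun h _ => hassoc _ _ _
      _ = ∑ g : G, B (x g) (ρ g (∑ h : G, y h * ρ h (z (h⁻¹ * (g⁻¹ * g₀))))) := by
          refine Finset.sum_congr rfl fun g _ => ?_
          rw [map_sum, hsum_r]
          refine (Fintype.sum_equiv (Equiv.mulLeft g) _ _ fun h' => ?_).symm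
          have e2 : ρ g (y h' * ρ h' (z (h'⁻¹ * (g⁻¹ * g₀))))
              = ρ g (y h') * ρ (g * h') (z ((g * h')⁻¹ * g₀)) := by
            have eArg : (g * h')⁻¹ * g₀ = h'⁻¹ * (g⁻¹ * g₀) := by
              rw [mul_inv_rev, mul_assoc]
            rw [map_mul, eArg, map_mul ρ g h']
            rfl
          simp only [Equiv.coe_mulLeft]
          rw [inv_mul_cancel_left, e2]
  · -- symmetry
    intro x y
    refine Fintype.sum_equiv ((Equiv.inv G).trans (Equiv.mulRight g₀)) _ _ fun g => ?_
    have e0 : ((Equiv.inv G).trans (Equiv.mulRight g₀)) g = g⁻¹ * g₀ := rfl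
    rw [e0]
    have e1 : (g⁻¹ * g₀)⁻¹ * g₀ = g := by
      rw [mul_inv_rev, inv_inv, mul_assoc, hcomm g g₀, inv_mul_cancel_left]
    rw [e1]
    calc B (x g) (ρ g (y (g⁻¹ * g₀)))
        = B (y (g⁻¹ * g₀)) (ρ g⁻¹ (ν (x g))) := hρν g _ _
      _ = B (y (g⁻¹ * g₀)) (ρ (g⁻¹ * g₀) (x g)) := by
          rw [map_mul, hg₀]
          rfl
  · -- nondegeneracy
    intro x hx
    funext h
    show x h = (0 : Λ)
    apply hnd
    intro d
    have key : ∑ g : G, B (x g) (ρ g ((Pi.single (h⁻¹ * g₀) ((ρ h).symm d) : G → Λ) (g⁻¹ * g₀))) = 0 :=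
      hx (Pi.single (h⁻¹ * g₀) ((ρ h).symm d))
    have hz : ∀ g ∈ Finset.univ, g ≠ h →
        B (x g) (ρ g ((Pi.single (h⁻¹ * g₀) ((ρ h).symm d) : G → Λ) (g⁻¹ * g₀))) = 0 := by
      intro g _ hg
      have hne : g⁻¹ * g₀ ≠ h⁻¹ * g₀ := by
        intro hEq
        exact hg (inv_injective (mul_right_cancel hEq))
      rw [Pi.single_eq_of_ne hne, map_zero, h0r]
    rw [Finset.sum_eq_single h hz (fun hh => absurd (Finset.mem_univ h) hh)] at key
    rwa [Pi.single_eq_same, AlgEquiv.apply_symm_apply] at key
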